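/- Total randomisation criterion: for an s-finite measure σ on a nonempty standard Borel space T, there exists a total measurable function g : ℝ → T with σ = g_* λ (λ Lebesgue measure on ℝ) if and only if σ(T) = ∞. -/

import Mathlib

open MeasureTheory Set Filter Topology

namespace TotalRandAux

lemma map_injective_of_embedding {α β : Type*} [MeasurableSpace α] [MeasurableSpace β] {f : α → β}
    (hf : MeasurableEmbedding f) {μ ν : Measure α} (h : μ.map f = ν.map f) : μ = ν := by
  ext s hs
  have h2 := congrArg (fun m : Measure β => m (f '' s)) h
  simpa [hf.map_apply, Set.preimage_image_eq _ hf.injective] using h2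

lemma Ioo_disjoint_Ioo {a b c d : ℝ} (h : b ≤ c) : Disjoint (Ioo a b) (Ioo c d) := by
  rw [Set.disjoint_left]
  rintro x ⟨_, h2⟩ ⟨h3, _⟩
  linarith

/-- Quantile lemma: any probability measure on `ℝ` is the pushforward of the uniform
distribution on `(0,1)` under a measurable (quantile) function. -/
lemma exists_quantile (p : Measure ℝ) [IsProbabilityMeasure p] :
    ∃ q : ℝ → ℝ, Measurable q ∧ Measure.map q (volume.restrict (Ioo (0:ℝ) 1)) = p := by
  set F : ℝ → ℝ := fun x => ProbabilityTheory.cdf p x with hF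
  have hFmono : Monotone F := ProbabilityTheory.monotone_cdf p
  set q : ℝ → ℝ := fun u => if 0 < u ∧ u < 1 then sInf {x | u ≤ F x} else 0 with hq
  have key : ∀ u : ℝ, 0 < u → u < 1 → ∀ x : ℝ, (q u ≤ x ↔ u ≤ F x) := by
    intro u hu0 hu1 x
    have hne : {x | u ≤ F x}.Nonempty := by
      have h1 : ∀ᶠ y in atTop, u ≤ F y :=
        (ProbabilityTheory.tendsto_cdf_atTop p).eventually (eventually_ge_nhds hu1)
      exact h1.exists
    have hbdd : BddBelow {x | u ≤ F x} := by
      have h0 : ∀ᶠ y in atBot, F y < u :=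
        (ProbabilityTheory.tendsto_cdf_atBot p).eventually (eventually_lt_nhds hu0)
      obtain ⟨y, hy⟩ := eventually_atBot.1 h0
      refine ⟨y, fun x hx => ?_⟩
      by_contra hxy
      exact absurd hx (not_le.2 (hy x (le_of_not_ge hxy)))
    have hqu : q u = sInf {x | u ≤ F x} := if_pos ⟨hu0, hu1⟩
    constructor
    · intro hle
      have hmem : u ≤ F (sInf {x | u ≤ F x}) := by
        set c := sInf {x | u ≤ F x} with hc
        have hev : ∀ᶠ y in 𝓝[>] c, u ≤ F y := by
          filter_upwards [self_mem_nhdsWithin] with y hy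
          obtain ⟨s, hs, hsy⟩ := (csInf_lt_iff hbdd hne).1 hy
          exact le_trans hs (hFmono hsy.le)
        have htd : Tendsto F (𝓝[>] c) (𝓝 (F c)) :=
          ((ProbabilityTheory.cdf p).right_continuous c).tendsto.mono_left
            (nhdsWithin_mono c Ioi_subset_Ici_self)
        exact ge_of_tendsto htd hev
      calc u ≤ F (sInf {x | u ≤ F x}) := hmem
        _ ≤ F x := hFmono (hqu ▸ hle)
    · intro hx
      rw [hqu]
      exact csInf_le hbdd hx
  have hmq : Measurable q := by
    apply measurable_of_Iic
    intro x
    have hset : q ⁻¹' Iic x =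
        (Ioo (0:ℝ) 1 ∩ Iic (F x)) ∪ ((Ioo (0:ℝ) 1)ᶜ ∩ {_u : ℝ | (0:ℝ) ≤ x}) := by
      ext u
      by_cases hu : 0 < u ∧ u < 1
      · have := key u hu.1 hu.2 x
        simp only [mem_preimage, mem_Iic, mem_union, mem_inter_iff, mem_Ioo, mem_compl_iff,
          mem_setOf_eq]
        constructor
        · intro h; exact Or.inl ⟨hu, this.1 h⟩
        · rintro (⟨_, h⟩ | ⟨hcon, _⟩)
          · exact this.2 h
          · exact absurd hu hcon
      · simp only [mem_preimage, mem_Iic, hq, if_neg hu, mem_union, mem_inter_iff, mem_Ioo,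
          mem_compl_iff, mem_setOf_eq]
        constructor
        · intro h; exact Or.inr ⟨hu, h⟩
        · rintro (⟨hcon, _⟩ | ⟨_, h⟩)
          · exact absurd hcon hu
          · exact h
    rw [hset]
    exact (measurableSet_Ioo.inter measurableSet_Iic).union
      (measurableSet_Ioo.compl.inter (MeasurableSet.const _))
  have hIoo : volume (Ioo (0:ℝ) 1) = 1 := by simp
  haveI : IsProbabilityMeasure (volume.restrict (Ioo (0:ℝ) 1)) := by
    constructor
    rw [Measure.restrict_apply_univ, hIoo]
  refine ⟨q, hmq, ?_⟩
  haveI : IsProbabilityMeasure ((volume.restrict (Ioo (0:ℝ) 1)).map q) :=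
    Measure.isProbabilityMeasure_map hmq.aemeasurable
  refine Measure.ext_of_Iic _ _ (fun x => ?_)
  rw [Measure.map_apply hmq measurableSet_Iic,
    Measure.restrict_apply (hmq measurableSet_Iic)]
  have hset : q ⁻¹' Iic x ∩ Ioo (0:ℝ) 1 = Iic (F x) ∩ Ioo (0:ℝ) 1 := by
    ext u
    simp only [mem_inter_iff, mem_preimage, mem_Iic, mem_Ioo]
    constructor
    · rintro ⟨h, hu⟩; exact ⟨(key u hu.1 hu.2 x).1 h, hu⟩
    · rintro ⟨h, hu⟩; exact ⟨(key u hu.1 hu.2 x).2 h, hu⟩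
  rw [hset]
  have h0 : 0 ≤ F x := ProbabilityTheory.cdf_nonneg p x
  have h1 : F x ≤ 1 := ProbabilityTheory.cdf_le_one p x
  rw [← ProbabilityTheory.ofReal_cdf p x]
  rcases lt_or_ge (F x) 1 with h | h
  · have : Iic (F x) ∩ Ioo (0:ℝ) 1 = Ioc 0 (F x) := by
      ext u
      simp only [mem_inter_iff, mem_Iic, mem_Ioo, mem_Ioc]
      constructor
      · rintro ⟨h2, h3, _⟩; exact ⟨h3, h2⟩
      · rintro ⟨h2, h3⟩; exact ⟨h3, h2, lt_of_le_of_lt h3 h⟩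
    rw [this, Real.volume_Ioc, sub_zero]
  · have hFx : F x = (1:ℝ) := le_antisymm h1 h
    have : Iic (F x) ∩ Ioo (0:ℝ) 1 = Ioo (0:ℝ) 1 := by
      rw [hFx]
      ext u
      simp only [mem_inter_iff, mem_Iic, mem_Ioo]
      exact ⟨fun h => h.2, fun h => ⟨h.2.le, h⟩⟩
    rw [this, hIoo]
    show (1:ENNReal) = ENNReal.ofReal (F x)
    rw [hFx, ENNReal.ofReal_one]

/-- Interval randomisation: a finite measure on a nonempty standard Borel space is the
pushforward of Lebesgue measure restricted to an open interval of matching length. -/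
lemma exists_map_restrict_Ioo {T : Type*} [MeasurableSpace T] [StandardBorelSpace T]
    [Nonempty T] (μ : Measure T) [IsFiniteMeasure μ] (a : ℝ) :
    ∃ g : ℝ → T, Measurable g ∧
      Measure.map g (volume.restrict (Ioo a (a + (μ Set.univ).toReal))) = μ := by
  classical
  obtain ⟨t₀⟩ := ‹Nonempty T›
  by_cases hzero : μ = 0
  · refine ⟨fun _ => t₀, measurable_const, ?_⟩
    rw [hzero]
    simp
  · have hc0 : μ Set.univ ≠ 0 := by
      simpa [Measure.measure_univ_eq_zero] using hzero
    have hcT : μ Set.univ ≠ ⊤ := measure_ne_top μ _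
    set c : ℝ := (μ Set.univ).toReal with hc
    have hcpos : 0 < c := ENNReal.toReal_pos hc0 hcT
    set p' : Measure T := (μ Set.univ)⁻¹ • μ with hp'
    haveI hpp' : IsProbabilityMeasure p' := by
      constructor
      rw [hp', Measure.smul_apply, smul_eq_mul, ENNReal.inv_mul_cancel hc0 hcT]
    obtain ⟨s, hs, ⟨e⟩⟩ := exists_subset_real_measurableEquiv T
    have hcoe : Measurable (fun t : T => (e t : ℝ)) :=
      measurable_subtype_coe.comp e.measurable
    set p : Measure ℝ := p'.map (fun t => (e t : ℝ)) with hpdef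
    haveI : IsProbabilityMeasure p := Measure.isProbabilityMeasure_map hcoe.aemeasurable
    obtain ⟨q, hmq, hqmap⟩ := exists_quantile p
    have hps : p sᶜ = 0 := by
      rw [hpdef, Measure.map_apply hcoe hs.compl]
      have hpre : (fun t : T => (e t : ℝ)) ⁻¹' sᶜ = ∅ := by
        ext t
        simp [(e t).2]
      rw [hpre]
      simp
    set val : ℝ → ℝ := fun u => if q u ∈ s then q u else (e t₀ : ℝ) with hval
    have hvs : ∀ u, val u ∈ s := by
      intro u
      by_cases h : q u ∈ s <;> simp [hval, h, (e t₀).2]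
    have hmval : Measurable val := Measurable.ite (hmq hs) hmq measurable_const
    set φ : ℝ → s := fun u => ⟨val u, hvs u⟩ with hφ
    have hmφ : Measurable φ := hmval.subtype_mk
    set g0 : ℝ → T := fun u => e.symm (φ u) with hg0
    have hmg0 : Measurable g0 := e.symm.measurable.comp hmφ
    set lam := volume.restrict (Ioo (0:ℝ) 1) with hlam
    have hqs : ∀ᵐ u ∂lam, q u ∈ s := by
      have h0 : lam (q ⁻¹' sᶜ) = 0 := by
        rw [← Measure.map_apply hmq hs.compl, hqmap]
        exact hps
      rw [MeasureTheory.ae_iff]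
      have hseteq : {u : ℝ | ¬ q u ∈ s} = q ⁻¹' sᶜ := by
        ext u
        simp
      rw [hseteq]
      exact h0
    have hvq : val =ᵐ[lam] q := by
      filter_upwards [hqs] with u hu
      show val u = q u
      simp only [hval]
      rw [if_pos hu]
    have hemb : MeasurableEmbedding (fun t : T => (e t : ℝ)) :=
      (MeasurableEmbedding.subtype_coe hs).comp e.measurableEmbedding
    have hgmap : Measure.map g0 lam = p' := by
      apply map_injective_of_embedding hemb
      rw [Measure.map_map hcoe hmg0]
      have hcomp : ((fun t : T => (e t : ℝ)) ∘ g0) = val := by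
        funext u
        simp [hg0, hφ, MeasurableEquiv.apply_symm_apply]
      rw [hcomp, Measure.map_congr hvq, hqmap, hpdef]
    -- rescaling
    set A : ℝ → ℝ := fun u => c⁻¹ * (u + (-a)) with hA
    have hmA : Measurable A := by fun_prop
    have hApre : A ⁻¹' (Ioo (0:ℝ) 1) = Ioo a (a + c) := by
      ext u
      simp only [hA, mem_preimage, mem_Ioo]
      constructor
      · rintro ⟨h1, h2⟩
        have h1' : 0 < u + (-a) := by
          by_contra hcon
          push_neg at hcon
          nlinarith [mul_nonpos_of_nonneg_of_nonpos (le_of_lt (inv_pos.2 hcpos)) hcon]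
        have h2' : u + (-a) < c := by
          by_contra hcon
          push_neg at hcon
          have := mul_le_mul_of_nonneg_left hcon (le_of_lt (inv_pos.2 hcpos))
          rw [inv_mul_cancel₀ (ne_of_gt hcpos)] at this
          linarith
        constructor <;> linarith
      · rintro ⟨h1, h2⟩
        constructor
        · exact mul_pos (inv_pos.2 hcpos) (by linarith)
        · have : u + (-a) < c := by linarith
          calc c⁻¹ * (u + (-a)) < c⁻¹ * c :=
                mul_lt_mul_of_pos_left this (inv_pos.2 hcpos)
            _ = 1 := inv_mul_cancel₀ (ne_of_gt hcpos)
    have hmapA : Measure.map A volume = ENNReal.ofReal c • volume := by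
      have h1 : A = (fun v : ℝ => c⁻¹ * v) ∘ (fun u : ℝ => u + (-a)) := rfl
      rw [h1, ← Measure.map_map (by fun_prop) (by fun_prop),
        MeasureTheory.map_add_right_eq_self volume (-a),
        Real.map_volume_mul_left (inv_ne_zero (ne_of_gt hcpos)), inv_inv,
        abs_of_pos hcpos]
    have hAres : Measure.map A (volume.restrict (Ioo a (a + c))) = (μ Set.univ) • lam := by
      rw [← hApre, ← Measure.restrict_map hmA measurableSet_Ioo, hmapA, hlam,
        Measure.restrict_smul, ENNReal.ofReal_toReal hcT]
    refine ⟨g0 ∘ A, hmg0.comp hmA, ?_⟩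
    rw [← Measure.map_map hmg0 hmA, hAres, Measure.map_smul, hgmap, hp',
      smul_smul, ENNReal.mul_inv_cancel hc0 hcT, one_smul]

end TotalRandAux

open TotalRandAux

/-- Total randomisation criterion: an s-finite measure `σ` on a nonempty standard Borel space
`T` is the pushforward of Lebesgue measure on `ℝ` along a total measurable function iff
`σ T = ∞`. -/
theorem total_randomisation_iff {T : Type*} [MeasurableSpace T] [StandardBorelSpace T]
    [Nonempty T] (σ : Measure T) [SFinite σ] :
    (∃ g : ℝ → T, Measurable g ∧ σ = Measure.map g volume) ↔ σ Set.univ = ⊤ := by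
  constructor
  · rintro ⟨g, hg, rfl⟩
    rw [Measure.map_apply hg MeasurableSet.univ, Set.preimage_univ, Real.volume_univ]
  · intro hσ
    classical
    obtain ⟨t₀⟩ := ‹Nonempty T›
    set ν : ℕ → Measure T := fun n => (2:ENNReal)⁻¹ • sfiniteSeq σ (n / 2) with hν
    haveI hνfin : ∀ n, IsFiniteMeasure (ν n) := by
      intro n
      constructor
      rw [hν]
      simp only [Measure.smul_apply, smul_eq_mul]
      exact ENNReal.mul_lt_top (by simp) (measure_lt_top _ _)
    have hhalf : ∀ k, ν (2 * k) = ν (2 * k + 1) := by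
      intro k
      show (2:ENNReal)⁻¹ • sfiniteSeq σ ((2 * k) / 2) = 2⁻¹ • sfiniteSeq σ ((2 * k + 1) / 2)
      rw [show (2 * k) / 2 = (2 * k + 1) / 2 from by omega]
    have hν2k : ∀ k, ν (2 * k) = (2:ENNReal)⁻¹ • sfiniteSeq σ k := by
      intro k
      show (2:ENNReal)⁻¹ • sfiniteSeq σ ((2 * k) / 2) = 2⁻¹ • sfiniteSeq σ k
      rw [show (2 * k) / 2 = k from by omega]
    have hsum : Measure.sum ν = σ := by
      ext V hV
      rw [Measure.sum_apply _ hV]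
      conv_rhs => rw [← sum_sfiniteSeq σ]
      rw [Measure.sum_apply _ hV]
      rw [← tsum_even_add_odd ENNReal.summable ENNReal.summable]
      have step : ∀ k, ν (2 * k) V + ν (2 * k + 1) V = sfiniteSeq σ k V := by
        intro k
        rw [← hhalf k, hν2k k]
        simp only [Measure.smul_apply, smul_eq_mul]
        rw [← add_mul, ENNReal.inv_two_add_inv_two, one_mul]
      rw [← ENNReal.tsum_add]
      exact tsum_congr step
    set d : ℕ → ℝ := fun n => ((ν n) Set.univ).toReal with hd
    have hdnn : ∀ n, 0 ≤ d n := fun n => ENNReal.toReal_nonneg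
    have hdodd : ∀ k, d (2 * k + 1) = d (2 * k) := by
      intro k; rw [hd]; simp only; rw [hhalf k]
    set E : ℕ → ℝ := fun K => ∑ j ∈ Finset.range K, d (2 * j) with hE
    have hE0 : E 0 = 0 := by simp [hE]
    have hEnn : ∀ K, 0 ≤ E K := fun K => Finset.sum_nonneg fun j _ => hdnn _
    have hEsucc : ∀ K, E (K + 1) = E K + d (2 * K) := by
      intro K; rw [hE]; exact Finset.sum_range_succ _ _
    have hEmono : Monotone E := by
      apply monotone_nat_of_le_succ
      intro K
      rw [hEsucc K]
      linarith [hdnn (2 * K)]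
    have hEunbdd : ∀ M : ℝ, ∃ K, M < E K := by
      intro M
      have htop : ∑' k, (ν (2 * k)) Set.univ = ⊤ := by
        have h1 : ∀ k, (ν (2 * k)) Set.univ = 2⁻¹ * sfiniteSeq σ k Set.univ := by
          intro k; rw [hν2k k]; simp
        rw [tsum_congr h1, ENNReal.tsum_mul_left]
        have h2 : ∑' k, sfiniteSeq σ k Set.univ = σ Set.univ := by
          conv_rhs => rw [← sum_sfiniteSeq σ]
          rw [Measure.sum_apply _ MeasurableSet.univ]
        rw [h2, hσ, ENNReal.mul_top (by simp)]
      have htd := ENNReal.tendsto_nat_tsum (fun k => (ν (2 * k)) Set.univ)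
      rw [htop] at htd
      have hev : ∀ᶠ K in atTop, ENNReal.ofReal M <
          ∑ j ∈ Finset.range K, (ν (2 * j)) Set.univ :=
        htd.eventually (eventually_gt_nhds ENNReal.ofReal_lt_top)
      obtain ⟨K, hK⟩ := hev.exists
      refine ⟨K, ?_⟩
      have hEK : ENNReal.ofReal (E K) = ∑ j ∈ Finset.range K, (ν (2 * j)) Set.univ := by
        rw [hE]
        rw [ENNReal.ofReal_sum_of_nonneg (fun j _ => hdnn _)]
        refine Finset.sum_congr rfl fun j _ => ?_
        rw [hd]
        exact ENNReal.ofReal_toReal (measure_ne_top _ _)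
      by_contra hcon
      push_neg at hcon
      have := ENNReal.ofReal_le_ofReal hcon
      rw [hEK] at this
      exact absurd hK (not_lt.2 this)
    -- interval left endpoints
    set a : ℕ → ℝ := fun n => if Even n then E (n / 2) else -(E (n / 2 + 1)) with ha
    set A : ℕ → Set ℝ := fun n => Ioo (a n) (a n + d n) with hA
    have hAeven : ∀ k, A (2 * k) = Ioo (E k) (E (k + 1)) := by
      intro k
      rw [hA, ha]
      have h2k : (2 * k) / 2 = k := by omega
      simp only [even_two_mul k, if_pos, h2k]
      rw [hEsucc k]
    have hAodd : ∀ k, A (2 * k + 1) = Ioo (-(E (k + 1))) (-(E k)) := by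
      intro k
      rw [hA, ha]
      have h2k : (2 * k + 1) / 2 = k := by omega
      have hodd : ¬ Even (2 * k + 1) := by simp [Nat.even_add_one, parity_simps]
      simp only [hodd, if_false, h2k]
      have : -(E (k + 1)) + d (2 * k + 1) = -(E k) := by
        rw [hdodd k, hEsucc k]; ring
      rw [this]
    have hAmeas : ∀ n, MeasurableSet (A n) := fun n => measurableSet_Ioo
    have hdisj : Pairwise (Function.onFun Disjoint A) := by
      have keydisj : ∀ m n, m < n → Disjoint (A m) (A n) := by
        intro m n hmn
        rcases Nat.even_or_odd m with ⟨km, hkm⟩ | ⟨km, hkm⟩ <;>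
          rcases Nat.even_or_odd n with ⟨kn, hkn⟩ | ⟨kn, hkn⟩
        · -- even even
          have hm : m = 2 * km := by omega
          have hn : n = 2 * kn := by omega
          rw [hm, hn, hAeven, hAeven]
          have hk : km < kn := by omega
          exact Ioo_disjoint_Ioo (hEmono hk)
        · -- m even, n odd
          have hm : m = 2 * km := by omega
          have hn : n = 2 * kn + 1 := by omega
          rw [hm, hn, hAeven, hAodd]
          rw [Set.disjoint_left]
          rintro x ⟨hx1, _⟩ ⟨_, hx4⟩
          have := hEnn km
          have := hEnn kn
          linarith
        · -- m odd, n even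
          have hm : m = 2 * km + 1 := by omega
          have hn : n = 2 * kn := by omega
          rw [hm, hn, hAodd, hAeven]
          rw [Set.disjoint_left]
          rintro x ⟨_, hx2⟩ ⟨hx3, _⟩
          have := hEnn km
          have := hEnn kn
          linarith
        · -- odd odd
          have hm : m = 2 * km + 1 := by omega
          have hn : n = 2 * kn + 1 := by omega
          rw [hm, hn, hAodd, hAodd]
          have hk : km < kn := by omega
          have : E (km + 1) ≤ E kn := hEmono hk
          exact (Ioo_disjoint_Ioo (by linarith)).symm
      intro m n hmn
      rcases lt_or_gt_of_ne hmn with h | h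
      · exact keydisj m n h
      · exact (keydisj n m h).symm
    have hcov : (⋃ n, A n)ᶜ ⊆ ({0} : Set ℝ) ∪ Set.range E ∪ Set.range (fun k => -(E k)) := by
      intro x hx
      by_contra hcon
      simp only [Set.mem_union, Set.mem_singleton_iff, Set.mem_range, not_or, not_exists] at hcon
      obtain ⟨⟨hx0, hxE⟩, hxnE⟩ := hcon
      apply hx
      rcases lt_or_gt_of_ne hx0 with hneg | hpos
      · -- x < 0, use odd intervals with -x
        obtain ⟨K, hK⟩ := hEunbdd (-x)
        have hP : ∃ k, -x < E k := ⟨K, hK⟩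
        set k₀ := Nat.find hP with hk₀
        have hk₀pos : k₀ ≠ 0 := by
          intro h
          have := Nat.find_spec hP
          rw [← hk₀, h, hE0] at this
          linarith
        obtain ⟨j, hj⟩ : ∃ j, k₀ = j + 1 := ⟨k₀ - 1, by omega⟩
        have hjlt : E j ≤ -x := by
          have := Nat.find_min hP (m := j) (by omega)
          linarith [not_lt.1 this]
        have hjne : E j ≠ -x := by
          intro h
          exact hxnE j (by rw [h]; ring)
        have hjlt' : E j < -x := lt_of_le_of_ne hjlt hjne
        have hjgt : -x < E (j + 1) := by
          have := Nat.find_spec hP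
          rw [← hk₀, hj] at this
          exact this
        refine Set.mem_iUnion.2 ⟨2 * j + 1, ?_⟩
        rw [hAodd j]
        constructor <;> [linarith; linarith]
      · -- x > 0
        obtain ⟨K, hK⟩ := hEunbdd x
        have hP : ∃ k, x < E k := ⟨K, hK⟩
        set k₀ := Nat.find hP with hk₀
        have hk₀pos : k₀ ≠ 0 := by
          intro h
          have := Nat.find_spec hP
          rw [← hk₀, h, hE0] at this
          linarith
        obtain ⟨j, hj⟩ : ∃ j, k₀ = j + 1 := ⟨k₀ - 1, by omega⟩
        have hjlt : E j ≤ x := by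
          have := Nat.find_min hP (m := j) (by omega)
          linarith [not_lt.1 this]
        have hjne : E j ≠ x := fun h => hxE j h
        have hjlt' : E j < x := lt_of_le_of_ne hjlt hjne
        have hjgt : x < E (j + 1) := by
          have := Nat.find_spec hP
          rw [← hk₀, hj] at this
          exact this
        refine Set.mem_iUnion.2 ⟨2 * j, ?_⟩
        rw [hAeven j]
        exact ⟨hjlt', hjgt⟩
    have hnull : volume ((⋃ n, A n)ᶜ) = 0 := by
      refine measure_mono_null hcov ?_
      exact Set.Countable.measure_zero
        (((Set.countable_singleton 0).union (Set.countable_range E)).union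
          (Set.countable_range _)) _
    -- pick the piecewise maps
    have hpiece : ∀ n, ∃ g : ℝ → T, Measurable g ∧
        Measure.map g (volume.restrict (A n)) = ν n := by
      intro n
      obtain ⟨g, hg, hgm⟩ := exists_map_restrict_Ioo (ν n) (a n)
      exact ⟨g, hg, by rw [hA]; exact hgm⟩
    choose gf hgfm hgfmap using hpiece
    -- total covering family
    set B : ℕ → Set ℝ := fun n => if n = 0 then A 0 ∪ (⋃ m, A m)ᶜ else A n with hB
    have hBmeas : ∀ n, MeasurableSet (B n) := by
      intro n
      show MeasurableSet (if n = 0 then A 0 ∪ (⋃ m, A m)ᶜ else A n)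
      split
      · exact (hAmeas 0).union (MeasurableSet.iUnion hAmeas).compl
      · exact hAmeas n
    have htot : ∀ x : ℝ, ∃ n, x ∈ B n := by
      intro x
      by_cases hx : x ∈ ⋃ m, A m
      · obtain ⟨m, hm⟩ := Set.mem_iUnion.1 hx
        by_cases hm0 : m = 0
        · exact ⟨0, by rw [hB]; simp only [if_pos rfl]; exact Or.inl (hm0 ▸ hm)⟩
        · exact ⟨m, by rw [hB]; simp only [if_neg hm0]; exact hm⟩
      · exact ⟨0, by rw [hB]; simp only [if_pos rfl]; exact Or.inr hx⟩
    set g : ℝ → T := fun x => gf (Nat.find (htot x)) x with hg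
    have hmg : Measurable g := Measurable.find (p := fun n x => x ∈ B n) hgfm (fun n => hBmeas n) htot
    have hgA : ∀ n, ∀ x ∈ A n, g x = gf n x := by
      intro n x hx
      have hfind : Nat.find (htot x) = n := by
        rw [Nat.find_eq_iff]
        constructor
        · show x ∈ (if n = 0 then A 0 ∪ (⋃ m, A m)ᶜ else A n)
          split
          · next h => exact Set.mem_union_left _ (h ▸ hx)
          · exact hx
        · intro m hm
          have hn0 : n ≠ 0 := by omega
          show x ∉ (if m = 0 then A 0 ∪ (⋃ m, A m)ᶜ else A m)
          by_cases hm0 : m = 0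
          · rw [if_pos hm0]
            rintro (hA0 | hcomp)
            · exact (Set.disjoint_left.1 (hdisj (show (0:ℕ) ≠ n by omega))) hA0 hx
            · exact hcomp (Set.mem_iUnion.2 ⟨n, hx⟩)
          · rw [if_neg hm0]
            intro hAm
            exact (Set.disjoint_left.1 (hdisj (show m ≠ n by omega))) hAm hx
      rw [hg]
      simp only
      rw [hfind]
    -- final computation
    refine ⟨g, hmg, ?_⟩
    have hvol : volume = Measure.sum (fun n => volume.restrict (A n)) := by
      have h1 : volume.restrict (⋃ n, A n) + volume.restrict ((⋃ n, A n)ᶜ) = volume :=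
        Measure.restrict_add_restrict_compl (MeasurableSet.iUnion hAmeas)
      have h2 : volume.restrict ((⋃ n, A n)ᶜ) = 0 := Measure.restrict_eq_zero.2 hnull
      rw [h2, add_zero] at h1
      conv_lhs => rw [← h1]
      rw [Measure.restrict_iUnion hdisj hAmeas]
    conv_rhs => rw [hvol]
    rw [Measure.map_sum hmg.aemeasurable]
    have hmaps : ∀ n, Measure.map g (volume.restrict (A n)) = ν n := by
      intro n
      have hae : g =ᵐ[volume.restrict (A n)] gf n :=
        ae_restrict_of_forall_mem (hAmeas n) (hgA n)
      rw [Measure.map_congr hae, hgfmap n]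
    calc σ = Measure.sum ν := hsum.symm
      _ = Measure.sum (fun n => Measure.map g (volume.restrict (A n))) := by
          congr 1
          funext n
          exact (hmaps n).symm
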